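/- The quantale ([0,∞], inf, +, 0) of extended nonnegative reals, with multiplication given by addition, order the reverse of the usual order (so suprema are infima of reals), and unit 0, is not weakly tabular. -/

import Mathlib

open scoped ENNReal

/-- The quantale `([0,∞], ⋀, +, 0)` of extended nonnegative reals — whose lattice
order is the reverse of the usual order (so suprema are real infima), whose
multiplication is addition and whose unit is `0` — is not weakly tabular: it is not
true that every `q` is the real infimum of the composites `f + gs` of a left adjoint
`f` and a right adjoint `gs` lying (real-)above `q`. -/
theorem stmt_18 :
    ¬ (∀ q : ℝ≥0∞, q = sInf {r : ℝ≥0∞ | ∃ f fs g gs : ℝ≥0∞,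
        (fs + f ≤ 0 ∧ 0 ≤ f + fs) ∧ (gs + g ≤ 0 ∧ 0 ≤ g + gs) ∧
        r = f + gs ∧ q ≤ r}) := by
  intro h
  have h1 := h 1
  have : {r : ℝ≥0∞ | ∃ f fs g gs : ℝ≥0∞,
      (fs + f ≤ 0 ∧ 0 ≤ f + fs) ∧ (gs + g ≤ 0 ∧ 0 ≤ g + gs) ∧
      r = f + gs ∧ (1:ℝ≥0∞) ≤ r} = ∅ := by
    ext r
    simp only [Set.mem_setOf_eq, Set.mem_empty_iff_false, iff_false]
    rintro ⟨f, fs, g, gs, ⟨hf, -⟩, ⟨hg, -⟩, rfl, hq⟩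
    have hf0 : f = 0 := le_antisymm (le_trans (le_add_self) hf) (zero_le)
    have hgs0 : gs = 0 := le_antisymm (le_trans (le_self_add) hg) (zero_le)
    rw [hf0, hgs0, add_zero] at hq
    exact absurd hq (by simp)
  rw [this, sInf_empty] at h1
  exact absurd h1 (by simp)
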